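/- For √3/2 < r ≤ 1, let K_r ⊂ ℝ² be the pentagon K_r = conv{(0,1), (√3/2, −1/2), (−√3/2, −1/2), (√(1−r²), −r), (−√(1−r²), −r)}. Then K_r is in Löwner position, but the normalized difference body (1/D(K_r))·(K_r − K_r) is not in Löwner position. -/

import Mathlib

open MeasureTheory Metric Set Pointwise
open scoped RealInnerProductSpace

/-- A convex body: a compact convex set with nonempty interior. -/
def IsConvexBody {n : ℕ} (K : Set (EuclideanSpace ℝ (Fin n))) : Prop :=
  IsCompact K ∧ Convex ℝ K ∧ (interior K).Nonempty


/-- `K` is in Löwner position if `K ⊆ B₂ⁿ` and every ellipsoid (affine image of the unit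
ball) containing `K` has volume at least that of the unit ball. -/
def InLownerPosition {n : ℕ} (K : Set (EuclideanSpace ℝ (Fin n))) : Prop :=
  K ⊆ closedBall 0 1 ∧
  ∀ (A : EuclideanSpace ℝ (Fin n) ≃ₗ[ℝ] EuclideanSpace ℝ (Fin n)) (t : EuclideanSpace ℝ (Fin n)),
    K ⊆ (fun x => A x + t) '' closedBall 0 1 →
    volume (closedBall (0 : EuclideanSpace ℝ (Fin n)) 1) ≤
      volume ((fun x => A x + t) '' closedBall 0 1)

/-- The point `(a, b)` of the Euclidean plane. -/
noncomputable def pt (a b : ℝ) : EuclideanSpace ℝ (Fin 2) :=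
  (WithLp.equiv 2 (Fin 2 → ℝ)).symm ![a, b]

/-- The "sailing boat" pentagon `K_r`. -/
noncomputable def sailingBoat (r : ℝ) : Set (EuclideanSpace ℝ (Fin 2)) :=
  convexHull ℝ
    {pt 0 1, pt (Real.sqrt 3 / 2) (-(1/2)), pt (-(Real.sqrt 3 / 2)) (-(1/2)),
      pt (Real.sqrt (1 - r^2)) (-r), pt (-(Real.sqrt (1 - r^2))) (-r)}

/- ### Auxiliary lemmas -/

lemma pt_sub (a b c d : ℝ) : pt a b - pt c d = pt (a - c) (b - d) := by
  ext i; fin_cases i <;> rfl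

lemma pt_smul (k a b : ℝ) : k • pt a b = pt (k * a) (k * b) := by
  ext i; fin_cases i <;> rfl

lemma pt_eq_smul (a b : ℝ) : pt a b = a • pt 1 0 + b • pt 0 1 := by
  ext i; fin_cases i <;> simp [pt]

lemma map_pt (B : EuclideanSpace ℝ (Fin 2) →ₗ[ℝ] EuclideanSpace ℝ (Fin 2)) (a b : ℝ) :
    B (pt a b) = a • B (pt 1 0) + b • B (pt 0 1) := by
  rw [pt_eq_smul a b]; simp

lemma norm_le_of_sq (v : EuclideanSpace ℝ (Fin 2)) (c : ℝ) (hc : 0 ≤ c)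
    (h : v 0 ^ 2 + v 1 ^ 2 ≤ c ^ 2) : ‖v‖ ≤ c := by
  rw [EuclideanSpace.norm_eq]
  rw [show (Finset.univ.sum fun i => ‖v i‖ ^ 2) = v 0 ^ 2 + v 1 ^ 2 by
    simp [Fin.sum_univ_two, sq_abs]]
  calc Real.sqrt (v 0 ^ 2 + v 1 ^ 2) ≤ Real.sqrt (c ^ 2) := Real.sqrt_le_sqrt h
    _ = c := Real.sqrt_sq hc

lemma sq_norm_le (v : EuclideanSpace ℝ (Fin 2)) (c : ℝ)
    (h : ‖v‖ ≤ c) : v 0 ^ 2 + v 1 ^ 2 ≤ c ^ 2 := by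
  have h2 : v 0 ^ 2 + v 1 ^ 2 = ‖v‖ ^ 2 := by
    rw [EuclideanSpace.norm_eq, Real.sq_sqrt (by positivity)]
    simp [Fin.sum_univ_two, sq_abs]
  rw [h2]
  exact pow_le_pow_left₀ (norm_nonneg v) h 2

lemma norm_pt (a b : ℝ) : ‖pt a b‖ = Real.sqrt (a ^ 2 + b ^ 2) := by
  rw [EuclideanSpace.norm_eq]
  congr 1
  simp [Fin.sum_univ_two, sq_abs]
  rfl

lemma det_eq (B : EuclideanSpace ℝ (Fin 2) →ₗ[ℝ] EuclideanSpace ℝ (Fin 2)) :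
    LinearMap.det B = B (pt 1 0) 0 * B (pt 0 1) 1 - B (pt 1 0) 1 * B (pt 0 1) 0 := by
  have hb0 : (PiLp.basisFun 2 ℝ (Fin 2)) 0 = pt 1 0 := by
    ext i; fin_cases i <;> simp [pt, PiLp.basisFun_apply]
  have hb1 : (PiLp.basisFun 2 ℝ (Fin 2)) 1 = pt 0 1 := by
    ext i; fin_cases i <;> simp [pt, PiLp.basisFun_apply]
  rw [← LinearMap.det_toMatrix (PiLp.basisFun 2 ℝ (Fin 2)), Matrix.det_fin_two]
  simp [LinearMap.toMatrix_apply, PiLp.basisFun_repr, hb0, hb1]; ring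

lemma volume_image (A : EuclideanSpace ℝ (Fin 2) ≃ₗ[ℝ] EuclideanSpace ℝ (Fin 2))
    (t : EuclideanSpace ℝ (Fin 2)) (s : Set (EuclideanSpace ℝ (Fin 2))) :
    volume ((fun x => A x + t) '' s)
      = ENNReal.ofReal
          |LinearMap.det (A : EuclideanSpace ℝ (Fin 2) →ₗ[ℝ] EuclideanSpace ℝ (Fin 2))|
        * volume s := by
  have h1 : (fun x => A x + t) '' s
      = (fun y => y + t) ''
        ((A : EuclideanSpace ℝ (Fin 2) →ₗ[ℝ] EuclideanSpace ℝ (Fin 2)) '' s) := by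
    rw [Set.image_image]; rfl
  rw [h1, Set.image_add_right, measure_preimage_add_right,
    Measure.addHaar_image_linearMap]

noncomputable def diagMap (c0 c1 : ℝ) :
    EuclideanSpace ℝ (Fin 2) →ₗ[ℝ] EuclideanSpace ℝ (Fin 2) where
  toFun x := pt (c0 * x 0) (c1 * x 1)
  map_add' x y := by
    ext i; fin_cases i <;> simp [pt, PiLp.add_apply] <;> ring
  map_smul' k x := by
    ext i; fin_cases i <;> simp [pt, PiLp.smul_apply, smul_eq_mul] <;> ring

noncomputable def diagEquiv (c0 c1 : ℝ) (h0 : c0 ≠ 0) (h1 : c1 ≠ 0) :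
    EuclideanSpace ℝ (Fin 2) ≃ₗ[ℝ] EuclideanSpace ℝ (Fin 2) :=
  LinearEquiv.ofLinear (diagMap c0 c1) (diagMap c0⁻¹ c1⁻¹)
    (by ext x i; fin_cases i <;> simp [diagMap, pt] <;> field_simp)
    (by ext x i; fin_cases i <;> simp [diagMap, pt] <;> field_simp)

lemma pt_app0 (a b : ℝ) : pt a b 0 = a := rfl
lemma pt_app1 (a b : ℝ) : pt a b 1 = b := rfl

lemma diagEquiv_symm_apply (c0 c1 : ℝ) (h0 : c0 ≠ 0) (h1 : c1 ≠ 0)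
    (x : EuclideanSpace ℝ (Fin 2)) :
    (diagEquiv c0 c1 h0 h1).symm x = pt (c0⁻¹ * x 0) (c1⁻¹ * x 1) := rfl

lemma coe_diagEquiv (c0 c1 : ℝ) (h0 : c0 ≠ 0) (h1 : c1 ≠ 0) :
    ((diagEquiv c0 c1 h0 h1 : EuclideanSpace ℝ (Fin 2) ≃ₗ[ℝ] EuclideanSpace ℝ (Fin 2)) :
      EuclideanSpace ℝ (Fin 2) →ₗ[ℝ] EuclideanSpace ℝ (Fin 2)) = diagMap c0 c1 := rfl

lemma diagMap_apply (c0 c1 : ℝ) (x : EuclideanSpace ℝ (Fin 2)) :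
    diagMap c0 c1 x = pt (c0 * x 0) (c1 * x 1) := rfl

/- ### Part 1 : K_r is in Löwner position -/

lemma boat_subset_ball (r : ℝ) (h1 : Real.sqrt 3 / 2 < r) (h2 : r ≤ 1) :
    sailingBoat r ⊆ closedBall 0 1 := by
  have hs3 : Real.sqrt 3 ^ 2 = 3 := Real.sq_sqrt (by norm_num)
  have hr0 : (0:ℝ) ≤ r := le_of_lt (lt_of_le_of_lt (by positivity) h1)
  have hq : Real.sqrt (1 - r ^ 2) ^ 2 = 1 - r ^ 2 :=
    Real.sq_sqrt (by nlinarith)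
  apply convexHull_min _ (convex_closedBall _ _)
  intro x hx
  simp only [Set.mem_insert_iff, Set.mem_singleton_iff] at hx
  have hmem : ∀ a b : ℝ, a ^ 2 + b ^ 2 ≤ 1 → pt a b ∈ closedBall (0 : EuclideanSpace ℝ (Fin 2)) 1 := by
    intro a b hab
    rw [mem_closedBall_zero_iff]
    refine norm_le_of_sq _ 1 zero_le_one ?_
    rw [show (pt a b) 0 = a from rfl, show (pt a b) 1 = b from rfl]
    linarith
  rcases hx with rfl | rfl | rfl | rfl | rfl
  · exact hmem 0 1 (by norm_num)
  · exact hmem _ _ (by nlinarith)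
  · exact hmem _ _ (by nlinarith)
  · exact hmem _ _ (by nlinarith)
  · exact hmem _ _ (by nlinarith)

lemma det_bound_aux (s p0 p1 q0 q1 c0 c1 : ℝ) (hs : s ^ 2 = 3)
    (e1 : (0 * p0 + 1 * q0 - c0) ^ 2 + (0 * p1 + 1 * q1 - c1) ^ 2 ≤ 1 ^ 2)
    (e2 : (s / 2 * p0 + -(1/2) * q0 - c0) ^ 2 + (s / 2 * p1 + -(1/2) * q1 - c1) ^ 2 ≤ 1 ^ 2)
    (e3 : (-(s / 2) * p0 + -(1/2) * q0 - c0) ^ 2 + (-(s / 2) * p1 + -(1/2) * q1 - c1) ^ 2 ≤ 1 ^ 2) :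
    |p0 * q1 - p1 * q0| ≤ 1 := by
  have k0 : s ^ 2 * p0 ^ 2 = 3 * p0 ^ 2 := by rw [hs]
  have k1 : s ^ 2 * p1 ^ 2 = 3 * p1 ^ 2 := by rw [hs]
  have hsum : p0 ^ 2 + p1 ^ 2 + q0 ^ 2 + q1 ^ 2 ≤ 2 := by
    nlinarith [e1, e2, e3, k0, k1, sq_nonneg c0, sq_nonneg c1]
  rw [abs_le]
  constructor
  · nlinarith [hsum, sq_nonneg (p0 + q1), sq_nonneg (p1 - q0)]
  · nlinarith [hsum, sq_nonneg (p0 - q1), sq_nonneg (p1 + q0)]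

lemma boat_lowner (r : ℝ) (h1 : Real.sqrt 3 / 2 < r) (h2 : r ≤ 1) :
    InLownerPosition (sailingBoat r) := by
  refine ⟨boat_subset_ball r h1 h2, ?_⟩
  intro A t hsub
  have hmem1 : pt 0 1 ∈ sailingBoat r :=
    subset_convexHull ℝ _ (Set.mem_insert _ _)
  have hmem2 : pt (Real.sqrt 3 / 2) (-(1/2)) ∈ sailingBoat r :=
    subset_convexHull ℝ _ (Set.mem_insert_iff.mpr (Or.inr (Set.mem_insert _ _)))
  have hmem3 : pt (-(Real.sqrt 3 / 2)) (-(1/2)) ∈ sailingBoat r :=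
    subset_convexHull ℝ _
      (Set.mem_insert_iff.mpr (Or.inr (Set.mem_insert_iff.mpr (Or.inr (Set.mem_insert _ _)))))
  set B : EuclideanSpace ℝ (Fin 2) →ₗ[ℝ] EuclideanSpace ℝ (Fin 2) := A.symm.toLinearMap with hB
  set c : EuclideanSpace ℝ (Fin 2) := B t with hc
  have key : ∀ u : EuclideanSpace ℝ (Fin 2), u ∈ sailingBoat r → ‖B u - c‖ ≤ 1 := by
    intro u hu
    obtain ⟨x, hx, hxe⟩ := hsub hu
    have hAx : A x = u - t := eq_sub_of_add_eq hxe
    have hxB : x = B u - c := by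
      rw [hc, hB]
      show x = A.symm u - A.symm t
      rw [← map_sub, ← hAx, LinearEquiv.symm_apply_apply]
    rw [← hxB]
    exact mem_closedBall_zero_iff.mp hx
  set p : EuclideanSpace ℝ (Fin 2) := B (pt 1 0) with hp
  set q : EuclideanSpace ℝ (Fin 2) := B (pt 0 1) with hq
  have cc0 : ∀ a b : ℝ, (B (pt a b) - c) 0 = a * p 0 + b * q 0 - c 0 := by
    intro a b; rw [map_pt]
    simp [PiLp.sub_apply, PiLp.add_apply, PiLp.smul_apply, smul_eq_mul]
    rfl
  have cc1 : ∀ a b : ℝ, (B (pt a b) - c) 1 = a * p 1 + b * q 1 - c 1 := by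
    intro a b; rw [map_pt]
    simp [PiLp.sub_apply, PiLp.add_apply, PiLp.smul_apply, smul_eq_mul]
    rfl
  have e1 := sq_norm_le _ _ (key _ hmem1)
  have e2 := sq_norm_le _ _ (key _ hmem2)
  have e3 := sq_norm_le _ _ (key _ hmem3)
  rw [cc0, cc1] at e1 e2 e3
  have hs3 : Real.sqrt 3 ^ 2 = 3 := Real.sq_sqrt (by norm_num)
  have hdetB : |LinearMap.det B| ≤ 1 := by
    rw [det_eq B, ← hp, ← hq]
    exact det_bound_aux _ _ _ _ _ _ _ hs3 e1 e2 e3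
  have hcomp : B.comp (A : EuclideanSpace ℝ (Fin 2) →ₗ[ℝ] EuclideanSpace ℝ (Fin 2))
      = LinearMap.id := by
    apply LinearMap.ext; intro x
    simp [hB, LinearMap.comp_apply]
  have hdet1 : LinearMap.det B *
      LinearMap.det (A : EuclideanSpace ℝ (Fin 2) →ₗ[ℝ] EuclideanSpace ℝ (Fin 2)) = 1 := by
    rw [← LinearMap.det_comp, hcomp, LinearMap.det_id]
  have hdetA : 1 ≤ |LinearMap.det (A : EuclideanSpace ℝ (Fin 2) →ₗ[ℝ] EuclideanSpace ℝ (Fin 2))| := by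
    have habs : |LinearMap.det B| *
        |LinearMap.det (A : EuclideanSpace ℝ (Fin 2) →ₗ[ℝ] EuclideanSpace ℝ (Fin 2))| = 1 := by
      rw [← abs_mul, hdet1, abs_one]
    nlinarith [abs_nonneg (LinearMap.det B),
      abs_nonneg (LinearMap.det (A : EuclideanSpace ℝ (Fin 2) →ₗ[ℝ] EuclideanSpace ℝ (Fin 2)))]
  rw [volume_image]
  exact le_mul_of_one_le_left zero_le (ENNReal.one_le_ofReal.mpr hdetA)

/- ### Part 2 : the normalized difference body is not in Löwner position -/

noncomputable def A₀ : EuclideanSpace ℝ (Fin 2) ≃ₗ[ℝ] EuclideanSpace ℝ (Fin 2) :=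
  diagEquiv (19/20) (103/100) (by norm_num) (by norm_num)

lemma A₀_symm_apply (x : EuclideanSpace ℝ (Fin 2)) :
    A₀.symm x = pt ((19/20:ℝ)⁻¹ * x 0) ((103/100:ℝ)⁻¹ * x 1) := rfl

lemma coe_A₀ :
    ((A₀ : EuclideanSpace ℝ (Fin 2) ≃ₗ[ℝ] EuclideanSpace ℝ (Fin 2)) :
      EuclideanSpace ℝ (Fin 2) →ₗ[ℝ] EuclideanSpace ℝ (Fin 2)) = diagMap (19/20) (103/100) := rfl

lemma mem_ellipse (D x y : ℝ) (hD : 0 < D)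
    (h : (x * (20/19)) ^ 2 + (y * (100/103)) ^ 2 ≤ D ^ 2) :
    D⁻¹ • pt x y ∈
      (fun v => A₀ v + 0) ''
        closedBall (0 : EuclideanSpace ℝ (Fin 2)) 1 := by
  refine ⟨A₀.symm (D⁻¹ • pt x y),
    ?_, ?_⟩
  · rw [mem_closedBall_zero_iff, pt_smul, A₀_symm_apply, pt_app0, pt_app1]
    apply norm_le_of_sq _ 1 zero_le_one
    rw [pt_app0, pt_app1]
    have hD2 : 0 < D ^ 2 := by positivity
    rw [show ((19/20:ℝ)⁻¹ * (D⁻¹ * x)) ^ 2 + ((103/100:ℝ)⁻¹ * (D⁻¹ * y)) ^ 2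
        = ((x * (20/19)) ^ 2 + (y * (100/103)) ^ 2) / D ^ 2 by field_simp]
    rw [one_pow, div_le_one hD2]
    exact h
  · show A₀ (A₀.symm (D⁻¹ • pt x y)) + 0 = D⁻¹ • pt x y
    rw [LinearEquiv.apply_symm_apply, add_zero]

set_option maxHeartbeats 4000000 in
lemma boat_diff_not_lowner (r : ℝ) (h1 : Real.sqrt 3 / 2 < r) (h2 : r ≤ 1) :
    ¬ InLownerPosition
        ((Metric.diam (sailingBoat r))⁻¹ • (sailingBoat r - sailingBoat r)) := by
  rintro ⟨-, hall⟩
  have hs3 : Real.sqrt 3 ^ 2 = 3 := Real.sq_sqrt (by norm_num)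
  have hs0 : (0:ℝ) ≤ Real.sqrt 3 := Real.sqrt_nonneg 3
  have hs_lb : (1.6:ℝ) ≤ Real.sqrt 3 := by nlinarith [hs3, hs0]
  have hr_lb : (0.8:ℝ) ≤ r := by linarith
  have hq0 : (0:ℝ) ≤ Real.sqrt (1 - r ^ 2) := Real.sqrt_nonneg _
  have hqsq : Real.sqrt (1 - r ^ 2) ^ 2 = 1 - r ^ 2 := Real.sq_sqrt (by nlinarith)
  have hq_ub : Real.sqrt (1 - r ^ 2) ≤ 3/5 := by nlinarith [hqsq, hq0]
  -- lower bound for the diameter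
  have hfin : Set.Finite
      ({pt 0 1, pt (Real.sqrt 3 / 2) (-(1/2)), pt (-(Real.sqrt 3 / 2)) (-(1/2)),
        pt (Real.sqrt (1 - r^2)) (-r), pt (-(Real.sqrt (1 - r^2))) (-r)} :
        Set (EuclideanSpace ℝ (Fin 2))) := by
    apply Set.Finite.insert; apply Set.Finite.insert; apply Set.Finite.insert
    apply Set.Finite.insert; exact Set.finite_singleton _
  have hbdd : Bornology.IsBounded (sailingBoat r) :=
    (hfin.isCompact_convexHull ℝ).isBounded
  have hmemA : pt 0 1 ∈ sailingBoat r := subset_convexHull ℝ _ (Set.mem_insert _ _)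
  have hmemB : pt (Real.sqrt (1 - r^2)) (-r) ∈ sailingBoat r := by
    apply subset_convexHull ℝ _
    exact Set.mem_insert_iff.mpr (Or.inr (Set.mem_insert_iff.mpr (Or.inr
      (Set.mem_insert_iff.mpr (Or.inr (Set.mem_insert _ _))))))
  have hdist : dist (pt 0 1) (pt (Real.sqrt (1 - r^2)) (-r)) = Real.sqrt (2 + 2*r) := by
    rw [dist_eq_norm, pt_sub, norm_pt]
    congr 1
    nlinarith [hqsq]
  have hDlb : Real.sqrt (2 + 2*r) ≤ Metric.diam (sailingBoat r) := by
    rw [← hdist]; exact dist_le_diam_of_mem hbdd hmemA hmemB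
  have hsq : Real.sqrt (2 + 2*r) ^ 2 = 2 + 2*r := Real.sq_sqrt (by linarith)
  have hDpos : 0 < Metric.diam (sailingBoat r) := by
    refine lt_of_lt_of_le ?_ hDlb
    rw [show (0:ℝ) = Real.sqrt 0 by simp]
    exact Real.sqrt_lt_sqrt le_rfl (by linarith)
  have hD2 : 2 + 2*r ≤ Metric.diam (sailingBoat r) ^ 2 := by
    calc 2 + 2*r = Real.sqrt (2 + 2*r) ^ 2 := hsq.symm
      _ ≤ Metric.diam (sailingBoat r) ^ 2 :=
        pow_le_pow_left₀ (Real.sqrt_nonneg _) hDlb 2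
  -- the key pointwise estimates
  have G2 : ((Real.sqrt 3 / 2) * (20/19)) ^ 2 + ((3/2) * (100/103)) ^ 2 ≤ 2 + 2*r := by
    nlinarith [hs3, hr_lb]
  have G3 : (Real.sqrt 3 * (20/19)) ^ 2 ≤ 2 + 2*r := by
    nlinarith [hs3, hr_lb]
  have G4 : (Real.sqrt (1 - r ^ 2) * (20/19)) ^ 2 + ((1 + r) * (100/103)) ^ 2 ≤ 2 + 2*r := by
    nlinarith [hqsq, hr_lb, h2, sq_nonneg (r - 4/5)]
  have G5 : ((Real.sqrt 3 / 2 + Real.sqrt (1 - r ^ 2)) * (20/19)) ^ 2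
      + ((r - 1/2) * (100/103)) ^ 2 ≤ 2 + 2*r := by
    nlinarith [hs3, hqsq, hr_lb, h2, sq_nonneg (Real.sqrt 3 * Real.sqrt (1 - r ^ 2) - 11/10),
      mul_nonneg hs0 hq0, sq_nonneg (r - 4/5)]
  have G6 : ((2 * Real.sqrt (1 - r ^ 2)) * (20/19)) ^ 2 ≤ 2 + 2*r := by
    nlinarith [hqsq, hr_lb, h2, sq_nonneg (r - 4/5)]
  set D := Metric.diam (sailingBoat r) with hD
  have hsub : D⁻¹ • (sailingBoat r - sailingBoat r) ⊆
      (fun x => A₀ x + 0) '' closedBall (0 : EuclideanSpace ℝ (Fin 2)) 1 := by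
    rw [show sailingBoat r - sailingBoat r
        = convexHull ℝ
          (({pt 0 1, pt (Real.sqrt 3 / 2) (-(1/2)), pt (-(Real.sqrt 3 / 2)) (-(1/2)),
            pt (Real.sqrt (1 - r^2)) (-r), pt (-(Real.sqrt (1 - r^2))) (-r)} :
            Set (EuclideanSpace ℝ (Fin 2)))
           - ({pt 0 1, pt (Real.sqrt 3 / 2) (-(1/2)), pt (-(Real.sqrt 3 / 2)) (-(1/2)),
            pt (Real.sqrt (1 - r^2)) (-r), pt (-(Real.sqrt (1 - r^2))) (-r)} :
            Set (EuclideanSpace ℝ (Fin 2)))) from (convexHull_sub _ _).symm,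
      ← convexHull_smul]
    apply convexHull_min
    · intro z hz
      rw [Set.mem_smul_set] at hz
      obtain ⟨w, hw, rfl⟩ := hz
      rw [Set.mem_sub] at hw
      obtain ⟨pp, hp, qq, hq', rfl⟩ := hw
      simp only [Set.mem_insert_iff, Set.mem_singleton_iff] at hp hq'
      clear hall hfin hbdd hmemA hmemB hdist hDlb hsq
      rcases hp with rfl | rfl | rfl | rfl | rfl <;>
        rcases hq' with rfl | rfl | rfl | rfl | rfl <;>
        · rw [pt_sub]
          refine mem_ellipse _ _ _ hDpos ?_
          linarith [hD2, hr_lb, G2, G3, G4, G5, G6, mul_nonneg hs0 hq0]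
    · have he : (fun x : EuclideanSpace ℝ (Fin 2) => A₀ x + 0)
          = fun x => (A₀ : EuclideanSpace ℝ (Fin 2) →ₗ[ℝ] EuclideanSpace ℝ (Fin 2)) x := by
        funext x; simp
      rw [he]
      exact (convex_closedBall _ _).linear_image _
  have hv := hall A₀ 0 hsub
  rw [volume_image] at hv
  have hdet : LinearMap.det (A₀ : EuclideanSpace ℝ (Fin 2) →ₗ[ℝ] EuclideanSpace ℝ (Fin 2))
      = 1957/2000 := by
    rw [det_eq, coe_A₀,
      show diagMap (19/20) (103/100) (pt 1 0) = pt (19/20) 0 by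
        rw [diagMap_apply, pt_app0, pt_app1]; norm_num,
      show diagMap (19/20) (103/100) (pt 0 1) = pt 0 (103/100) by
        rw [diagMap_apply, pt_app0, pt_app1]; norm_num,
      pt_app0, pt_app1, pt_app0, pt_app1]
    norm_num
  rw [hdet] at hv
  have hV0 : volume (closedBall (0 : EuclideanSpace ℝ (Fin 2)) 1) ≠ 0 :=
    (measure_closedBall_pos volume (0 : EuclideanSpace ℝ (Fin 2)) one_pos).ne'
  have hVtop : volume (closedBall (0 : EuclideanSpace ℝ (Fin 2)) 1) ≠ ⊤ :=
    measure_closedBall_lt_top.ne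
  have hlt : ENNReal.ofReal |((1957:ℝ)/2000)| *
      volume (closedBall (0 : EuclideanSpace ℝ (Fin 2)) 1) <
      volume (closedBall (0 : EuclideanSpace ℝ (Fin 2)) 1) := by
    nth_rewrite 2 [← one_mul (volume (closedBall (0 : EuclideanSpace ℝ (Fin 2)) 1))]
    rw [ENNReal.mul_lt_mul_iff_left hV0 hVtop]
    rw [show |((1957:ℝ)/2000)| = 1957/2000 by norm_num]
    exact ENNReal.ofReal_lt_one.mpr (by norm_num)
  exact absurd hv (not_le.mpr hlt)

/-- For `√3/2 < r ≤ 1`, the sailing boat `K_r` is in Löwner position, but its normalized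
difference body is not. -/
theorem sailingBoat_lowner_but_difference_not (r : ℝ)
    (h1 : Real.sqrt 3 / 2 < r) (h2 : r ≤ 1) :
    InLownerPosition (sailingBoat r) ∧
    ¬ InLownerPosition
        ((Metric.diam (sailingBoat r))⁻¹ • (sailingBoat r - sailingBoat r)) :=
  ⟨boat_lowner r h1 h2, boat_diff_not_lowner r h1 h2⟩
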